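/- Let ξ be uniform on [0,1], g : ℝ → ℝ measurable with finite Gagliardo seminorm [g]_{W^{α,2}(t,t+τ)} for some α ∈ (0,1), K ∈ ℝ, τ > 0. Then (𝔼|∫₀^τ e^{ig(t+r)K} dr − τ e^{ig(t+τξ)K}|²)^{1/2} ≤ τ^{α+1/2} |K| [g]_{W^{α,2}(t,t+τ)}, where [g]²_{W^{α,2}(t,t+τ)} = ∫_t^{t+τ}∫_t^{t+τ} |g(r)−g(s)|²/|r−s|^{2α+1} dr ds. -/

import Mathlib

set_option maxHeartbeats 1000000


open MeasureTheory
open Set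

private lemma expI_lip (K a b : ℝ) :
    ‖Complex.exp (Complex.I * a * K) - Complex.exp (Complex.I * b * K)‖ ≤ |K| * |a - b| := by
  have hd : ∀ x : ℝ, HasDerivAt (fun y : ℝ => Complex.exp (Complex.I * y * K))
      (Complex.exp (Complex.I * x * K) * (Complex.I * K)) x := by
    intro x
    have h1 : HasDerivAt (fun z : ℂ => Complex.exp (Complex.I * z * K))
        (Complex.exp (Complex.I * (x:ℂ) * K) * (Complex.I * K)) (x : ℂ) := by
      have : HasDerivAt (fun z : ℂ => Complex.I * z * K) (Complex.I * K) (x : ℂ) := by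
        simpa using ((hasDerivAt_id (x:ℂ)).const_mul Complex.I).mul_const (K : ℂ)
      simpa using this.cexp
    exact h1.comp_ofReal
  have := Convex.norm_image_sub_le_of_norm_hasDerivWithin_le
    (f := fun y : ℝ => Complex.exp (Complex.I * y * K))
    (f' := fun x : ℝ => Complex.exp (Complex.I * x * K) * (Complex.I * K))
    (s := Set.univ) (fun x _ => (hd x).hasDerivWithinAt)
    (fun x _ => by
      have h2 : ‖Complex.exp (Complex.I * (x:ℝ) * K)‖ = 1 := by
        rw [Complex.norm_exp]
        simp
      rw [norm_mul, h2, one_mul, norm_mul]) convex_univ (Set.mem_univ b) (Set.mem_univ a)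
  simpa [Real.norm_eq_abs] using this


/-- One-step error estimate for the randomized quadrature:
`(𝔼|∫₀^τ e^{ig(t+r)K}dr − τe^{ig(t+τξ)K}|²)^{1/2}
  ≤ τ^{α+1/2} |K| [g]_{W^{α,2}(t,t+τ)}`. -/
theorem quadrature_error_sobolev_bound
    {Ω : Type*} [MeasurableSpace Ω] (ℙ : Measure Ω) [IsProbabilityMeasure ℙ]
    (ξ : Ω → ℝ) (hξ : Measurable ξ)
    (hunif : Measure.map ξ ℙ = volume.restrict (Set.Icc (0 : ℝ) 1))
    (g : ℝ → ℝ) (hg : Measurable g) (α : ℝ) (hα : α ∈ Set.Ioo (0 : ℝ) 1)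
    (τ t K : ℝ) (hτ : 0 < τ)
    -- finiteness of the Gagliardo seminorm of g on (t, t+τ)
    (hfin : IntegrableOn
      (fun p : ℝ × ℝ => (g p.1 - g p.2) ^ 2 / |p.1 - p.2| ^ (2 * α + 1))
      (Set.Ioo t (t + τ) ×ˢ Set.Ioo t (t + τ)) volume) :
    Real.sqrt (∫ ω, ‖(∫ r in (0 : ℝ)..τ,
          Complex.exp (Complex.I * (g (t + r) : ℂ) * (K : ℂ)))
        - (τ : ℂ) * Complex.exp (Complex.I * (g (t + τ * ξ ω) : ℂ) * (K : ℂ))‖ ^ 2 ∂ℙ)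
      ≤ τ ^ (α + 1 / 2) * |K| *
        Real.sqrt (∫ r in t..(t + τ), ∫ s in t..(t + τ),
          (g r - g s) ^ 2 / |r - s| ^ (2 * α + 1)) := by
  have h0τ : (0:ℝ) ≤ τ := hτ.le
  have htt : t ≤ t + τ := le_add_of_nonneg_right h0τ
  set p : ℝ := 2 * α + 1 with hp_def
  have hp_pos : 0 < p := by have := hα.1; rw [hp_def]; linarith
  set q : ℝ → ℝ → ℝ := fun a b => (g a - g b) ^ 2 / |a - b| ^ p with hq_def
  have hq_nonneg : ∀ a b : ℝ, 0 ≤ q a b := fun a b =>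
    div_nonneg (sq_nonneg _) (Real.rpow_nonneg (abs_nonneg _) _)
  have hrpow_meas : Measurable fun y : ℝ => y ^ p :=
    (Real.continuous_rpow_const hp_pos.le).measurable
  have hq_meas : Measurable fun z : ℝ × ℝ => ENNReal.ofReal (q z.1 z.2) := by
    apply ENNReal.measurable_ofReal.comp
    exact (((hg.comp measurable_fst).sub (hg.comp measurable_snd)).pow_const 2).div
      (hrpow_meas.comp (measurable_fst.sub measurable_snd).abs)
  have hgt : Measurable fun r : ℝ => g (t + r) := hg.comp (measurable_id.const_add t)
  set f : ℝ → ℂ := fun r => Complex.exp (Complex.I * (g (t + r) : ℂ) * (K : ℂ)) with hf_def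
  have hf_meas : Measurable f :=
    Complex.continuous_exp.measurable.comp
      (((Complex.measurable_ofReal.comp hgt).const_mul Complex.I).mul_const _)
  have hnorm1 : ∀ r : ℝ, ‖f r‖ = 1 := by
    intro r
    rw [hf_def]
    rw [Complex.norm_exp]
    simp
  -- the H function
  set H : ℝ → ENNReal := fun c => ∫⁻ r in Ioc (0:ℝ) τ,
      ENNReal.ofReal ((K * (g (t + r) - g (t + c))) ^ 2) with hH_def
  have hKg_meas : Measurable fun z : ℝ × ℝ =>
      ENNReal.ofReal ((K * (g (t + z.2) - g (t + z.1))) ^ 2) := by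
    apply ENNReal.measurable_ofReal.comp
    exact (((hgt.comp measurable_snd).sub (hgt.comp measurable_fst)).const_mul K).pow_const 2
  have hH_meas : Measurable H := hKg_meas.lintegral_prod_right'
  -- pointwise (in ω) bound
  have key : ∀ c : ℝ,
      ENNReal.ofReal (‖(∫ r in (0:ℝ)..τ, f r) - (τ:ℂ) * f c‖ ^ 2)
        ≤ ENNReal.ofReal τ * H c := by
    intro c
    have hfi : IntegrableOn f (Ioc 0 τ) volume := by
      refine Integrable.mono' (integrable_const 1) hf_meas.aestronglyMeasurable ?_
      exact Filter.Eventually.of_forall fun r => le_of_eq (hnorm1 r)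
    have e1 : (∫ r in (0:ℝ)..τ, f r) - (τ:ℂ) * f c
        = ∫ r in Ioc (0:ℝ) τ, (f r - f c) := by
      rw [intervalIntegral.integral_of_le h0τ,
        integral_sub hfi (integrableOn_const measure_Ioc_lt_top.ne),
        setIntegral_const, Real.volume_real_Ioc_of_le h0τ, sub_zero,
        Complex.real_smul]
    set φ : ℝ → ENNReal := fun r => ENNReal.ofReal ‖f r - f c‖ with hφ_def
    have hφ_meas : Measurable φ :=
      ENNReal.measurable_ofReal.comp (hf_meas.sub measurable_const).norm
    have CS : ∫⁻ r in Ioc (0:ℝ) τ, φ r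
        ≤ (∫⁻ r in Ioc (0:ℝ) τ, φ r ^ (2:ℝ)) ^ (1/2:ℝ) * ENNReal.ofReal τ ^ (1/2:ℝ) := by
      have h22 : Real.HolderConjugate 2 2 := Real.HolderConjugate.two_two
      have hone : AEMeasurable (fun _ : ℝ => (1:ENNReal)) (volume.restrict (Ioc (0:ℝ) τ)) :=
        aemeasurable_const
      have := ENNReal.lintegral_mul_le_Lp_mul_Lq (volume.restrict (Ioc (0:ℝ) τ)) h22
        hφ_meas.aemeasurable hone
      simp only [Pi.mul_apply, mul_one, ENNReal.one_rpow, lintegral_const,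
        Measure.restrict_apply_univ, Real.volume_Ioc, sub_zero, one_mul] at this
      exact this
    have step : ENNReal.ofReal ‖(∫ r in (0:ℝ)..τ, f r) - (τ:ℂ) * f c‖
        ≤ (∫⁻ r in Ioc (0:ℝ) τ, φ r ^ (2:ℝ)) ^ (1/2:ℝ) * ENNReal.ofReal τ ^ (1/2:ℝ) := by
      rw [e1]
      refine le_trans ?_ CS
      rw [ofReal_norm]
      refine le_trans (enorm_integral_le_lintegral_enorm _) ?_
      refine le_of_eq (lintegral_congr fun r => ?_)
      rw [hφ_def, ← ofReal_norm]
    have hA : (∫⁻ r in Ioc (0:ℝ) τ, φ r ^ (2:ℝ)) ≤ H c := by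
      refine lintegral_mono fun r => ?_
      have hlip := expI_lip K (g (t + r)) (g (t + c))
      have h1 : ‖f r - f c‖ ≤ |K * (g (t + r) - g (t + c))| := by
        rw [abs_mul]; exact hlip
      have : φ r ^ (2:ℝ) = ENNReal.ofReal (‖f r - f c‖ ^ 2) := by
        rw [hφ_def, ENNReal.ofReal_pow (norm_nonneg _), ← ENNReal.rpow_natCast]
        norm_num
      rw [this]
      refine ENNReal.ofReal_le_ofReal ?_
      rw [← sq_abs (K * _)]
      exact pow_le_pow_left₀ (norm_nonneg _) h1 2
    calc ENNReal.ofReal (‖(∫ r in (0:ℝ)..τ, f r) - (τ:ℂ) * f c‖ ^ 2)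
        = (ENNReal.ofReal ‖(∫ r in (0:ℝ)..τ, f r) - (τ:ℂ) * f c‖) ^ (2:ℝ) := by
          rw [ENNReal.ofReal_pow (norm_nonneg _), ← ENNReal.rpow_natCast]; norm_num
      _ ≤ ((∫⁻ r in Ioc (0:ℝ) τ, φ r ^ (2:ℝ)) ^ (1/2:ℝ) * ENNReal.ofReal τ ^ (1/2:ℝ)) ^ (2:ℝ) :=
          ENNReal.rpow_le_rpow step (by norm_num)
      _ = (∫⁻ r in Ioc (0:ℝ) τ, φ r ^ (2:ℝ)) * ENNReal.ofReal τ := by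
          rw [ENNReal.mul_rpow_of_nonneg _ _ (by norm_num : (0:ℝ) ≤ 2),
            ← ENNReal.rpow_mul, ← ENNReal.rpow_mul]
          norm_num
      _ ≤ H c * ENNReal.ofReal τ := mul_le_mul_left hA _
      _ = ENNReal.ofReal τ * H c := mul_comm _ _
  -- expectation
  set N : ENNReal := ∫⁻ ω, ENNReal.ofReal
      (‖(∫ r in (0:ℝ)..τ, f r) - (τ:ℂ) * f (τ * ξ ω)‖ ^ 2) ∂ℙ with hN_def
  have hmeasF : Measurable fun ω =>
      ‖(∫ r in (0:ℝ)..τ, f r) - (τ:ℂ) * f (τ * ξ ω)‖ ^ 2 :=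
    ((measurable_const.sub ((hf_meas.comp (hξ.const_mul τ)).const_mul (τ:ℂ))).norm).pow_const 2
  have hInt0 : (∫ ω, ‖(∫ r in (0:ℝ)..τ, f r) - (τ:ℂ) * f (τ * ξ ω)‖ ^ 2 ∂ℙ) = N.toReal := by
    rw [hN_def, integral_eq_lintegral_of_nonneg_ae
      (Filter.Eventually.of_forall fun ω => sq_nonneg _) hmeasF.aestronglyMeasurable]
  have step1 : N ≤ ENNReal.ofReal τ * ∫⁻ ω, H (τ * ξ ω) ∂ℙ := by
    calc N ≤ ∫⁻ ω, ENNReal.ofReal τ * H (τ * ξ ω) ∂ℙ :=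
          lintegral_mono fun ω => key (τ * ξ ω)
      _ = _ := lintegral_const_mul' _ _ ENNReal.ofReal_ne_top
  have hHξ : ∫⁻ ω, H (τ * ξ ω) ∂ℙ = ∫⁻ c in Icc (0:ℝ) 1, H (τ * c) := by
    rw [← hunif]
    exact (lintegral_map (hH_meas.comp (measurable_const_mul τ)) hξ).symm
  have hscale : ∫⁻ c in Icc (0:ℝ) 1, H (τ * c)
      = ENNReal.ofReal τ⁻¹ * ∫⁻ s in Icc (0:ℝ) τ, H s := by
    have hpre : (fun x : ℝ => τ * x) ⁻¹' Icc 0 τ = Icc 0 1 := by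
      rw [Set.preimage_const_mul_Icc₀ _ _ hτ, zero_div, div_self hτ.ne']
    have hmap : Measure.map (fun x : ℝ => τ * x) (volume.restrict (Icc 0 1))
        = ENNReal.ofReal τ⁻¹ • volume.restrict (Icc 0 τ) := by
      rw [← hpre, ← Measure.restrict_map (measurable_const_mul τ) measurableSet_Icc,
        Real.map_volume_mul_left hτ.ne', Measure.restrict_smul,
        abs_of_pos (inv_pos.2 hτ)]
    calc ∫⁻ c in Icc (0:ℝ) 1, H (τ * c)
        = ∫⁻ s, H s ∂(Measure.map (fun x : ℝ => τ * x) (volume.restrict (Icc 0 1))) :=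
          (lintegral_map hH_meas (measurable_const_mul τ)).symm
      _ = ENNReal.ofReal τ⁻¹ * ∫⁻ s in Icc (0:ℝ) τ, H s := by
          rw [hmap, lintegral_smul_measure, smul_eq_mul]
  have hττ : ENNReal.ofReal τ * ENNReal.ofReal τ⁻¹ = 1 := by
    rw [← ENNReal.ofReal_mul h0τ, mul_inv_cancel₀ hτ.ne', ENNReal.ofReal_one]
  have step2 : N ≤ ∫⁻ s in Icc (0:ℝ) τ, H s := by
    calc N ≤ ENNReal.ofReal τ * ∫⁻ ω, H (τ * ξ ω) ∂ℙ := step1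
      _ = ENNReal.ofReal τ * (ENNReal.ofReal τ⁻¹ * ∫⁻ s in Icc (0:ℝ) τ, H s) := by
          rw [hHξ, hscale]
      _ = ∫⁻ s in Icc (0:ℝ) τ, H s := by rw [← mul_assoc, hττ, one_mul]
  -- comparison with the Gagliardo integrand
  have hEpt : ∀ s ∈ Icc (0:ℝ) τ, ∀ r ∈ Ioc (0:ℝ) τ,
      ENNReal.ofReal ((K * (g (t + r) - g (t + s))) ^ 2)
        ≤ ENNReal.ofReal (K ^ 2 * τ ^ p) * ENNReal.ofReal (q (t + r) (t + s)) := by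
    intro s hs r hr
    rw [← ENNReal.ofReal_mul (by positivity)]
    refine ENNReal.ofReal_le_ofReal ?_
    have habs : |r - s| ≤ τ := by
      rw [abs_sub_le_iff]
      constructor <;> [linarith [hr.2, hs.1]; linarith [hr.1, hs.2]]
    have harg : |(t + r) - (t + s)| = |r - s| := by ring_nf
    have hqval : q (t + r) (t + s) = (g (t + r) - g (t + s)) ^ 2 / |r - s| ^ p := by
      rw [hq_def]
      simp only []
      rw [harg]
    have hΔ : (g (t + r) - g (t + s)) ^ 2 ≤ τ ^ p * q (t + r) (t + s) := by
      rw [hqval]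
      rcases eq_or_ne r s with h | h
      · subst h
        simp
      · have hpos : 0 < |r - s| := abs_pos.2 (sub_ne_zero.2 h)
        have hrp : 0 < |r - s| ^ p := Real.rpow_pos_of_pos hpos p
        have hle : |r - s| ^ p ≤ τ ^ p := Real.rpow_le_rpow (abs_nonneg _) habs hp_pos.le
        calc (g (t + r) - g (t + s)) ^ 2
            = |r - s| ^ p * ((g (t + r) - g (t + s)) ^ 2 / |r - s| ^ p) := by
              field_simp
          _ ≤ τ ^ p * ((g (t + r) - g (t + s)) ^ 2 / |r - s| ^ p) :=
              mul_le_mul_of_nonneg_right hle (div_nonneg (sq_nonneg _) hrp.le)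
    calc (K * (g (t + r) - g (t + s))) ^ 2
        = K ^ 2 * (g (t + r) - g (t + s)) ^ 2 := by ring
      _ ≤ K ^ 2 * (τ ^ p * q (t + r) (t + s)) :=
          mul_le_mul_of_nonneg_left hΔ (sq_nonneg K)
      _ = K ^ 2 * τ ^ p * q (t + r) (t + s) := by ring
  have step3 : ∫⁻ s in Icc (0:ℝ) τ, H s
      ≤ ENNReal.ofReal (K ^ 2 * τ ^ p) *
        ∫⁻ s in Icc (0:ℝ) τ, ∫⁻ r in Ioc (0:ℝ) τ, ENNReal.ofReal (q (t + r) (t + s)) := by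
    rw [← lintegral_const_mul' _ _ ENNReal.ofReal_ne_top]
    refine setLIntegral_mono' measurableSet_Icc fun s hs => ?_
    rw [hH_def]
    simp only []
    rw [← lintegral_const_mul' _ _ ENNReal.ofReal_ne_top]
    exact setLIntegral_mono' measurableSet_Ioc fun r hr => hEpt s hs r hr
  -- translation
  have hmp : MeasurePreserving (fun x : ℝ => t + x) volume volume :=
    measurePreserving_add_left volume t
  have hinner_meas : ∀ a : ℝ, Measurable fun b : ℝ => ENNReal.ofReal (q b a) := by
    intro a
    exact hq_meas.comp (measurable_id.prodMk measurable_const)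
  have hinner : ∀ a : ℝ, ∫⁻ r in Ioc (0:ℝ) τ, ENNReal.ofReal (q (t + r) a)
      = ∫⁻ b in Ioc t (t + τ), ENNReal.ofReal (q b a) := by
    intro a
    have hpre : (fun x : ℝ => t + x) ⁻¹' Ioc t (t + τ) = Ioc 0 τ := by
      rw [Set.preimage_const_add_Ioc]; simp
    rw [← hpre]
    exact hmp.setLIntegral_comp_preimage measurableSet_Ioc (hinner_meas a)
  have houter_meas : Measurable fun a : ℝ => ∫⁻ b in Ioc t (t + τ), ENNReal.ofReal (q b a) := by
    have : Measurable fun z : ℝ × ℝ => ENNReal.ofReal (q z.2 z.1) :=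
      hq_meas.comp (measurable_snd.prodMk measurable_fst)
    exact this.lintegral_prod_right'
  have htrans : ∫⁻ s in Icc (0:ℝ) τ, ∫⁻ r in Ioc (0:ℝ) τ, ENNReal.ofReal (q (t + r) (t + s))
      = ∫⁻ a in Icc t (t + τ), ∫⁻ b in Ioc t (t + τ), ENNReal.ofReal (q b a) := by
    have hpre : (fun x : ℝ => t + x) ⁻¹' Icc t (t + τ) = Icc 0 τ := by
      rw [Set.preimage_const_add_Icc]; simp
    calc ∫⁻ s in Icc (0:ℝ) τ, ∫⁻ r in Ioc (0:ℝ) τ, ENNReal.ofReal (q (t + r) (t + s))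
        = ∫⁻ s in Icc (0:ℝ) τ, ∫⁻ b in Ioc t (t + τ), ENNReal.ofReal (q b (t + s)) :=
          lintegral_congr fun s => hinner (t + s)
      _ = ∫⁻ a in Icc t (t + τ), ∫⁻ b in Ioc t (t + τ), ENNReal.ofReal (q b a) := by
          rw [← hpre]
          exact hmp.setLIntegral_comp_preimage measurableSet_Icc houter_meas
  -- symmetry
  have hsym : ∀ a b : ℝ, q b a = q a b := by
    intro a b
    rw [hq_def]
    simp only []
    rw [show (g b - g a) ^ 2 = (g a - g b) ^ 2 by ring, abs_sub_comm]
  -- measures on intervals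
  have hIcc : (volume : Measure ℝ).restrict (Icc t (t + τ))
      = (volume : Measure ℝ).restrict (Ioo t (t + τ)) :=
    (Measure.restrict_congr_set Ioo_ae_eq_Icc).symm
  have hIoc : (volume : Measure ℝ).restrict (Ioc t (t + τ))
      = (volume : Measure ℝ).restrict (Ioo t (t + τ)) :=
    (Measure.restrict_congr_set Ioo_ae_eq_Ioc).symm
  have hprod_meas : ((volume : Measure ℝ).restrict (Ioo t (t + τ))).prod
        ((volume : Measure ℝ).restrict (Ioo t (t + τ)))
      = (volume : Measure (ℝ × ℝ)).restrict (Ioo t (t + τ) ×ˢ Ioo t (t + τ)) := by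
    rw [Measure.prod_restrict, ← Measure.volume_eq_prod ℝ ℝ]
  have hT : ∫⁻ a in Icc t (t + τ), ∫⁻ b in Ioc t (t + τ), ENNReal.ofReal (q b a)
      = ∫⁻ z in Ioo t (t + τ) ×ˢ Ioo t (t + τ), ENNReal.ofReal (q z.1 z.2) := by
    calc ∫⁻ a in Icc t (t + τ), ∫⁻ b in Ioc t (t + τ), ENNReal.ofReal (q b a)
        = ∫⁻ a in Ioo t (t + τ), ∫⁻ b in Ioo t (t + τ), ENNReal.ofReal (q a b) := by
          rw [hIcc]
          refine lintegral_congr fun a => ?_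
          rw [hIoc]
          exact lintegral_congr fun b => by rw [hsym a b]
      _ = ∫⁻ z, ENNReal.ofReal (q z.1 z.2)
            ∂(((volume : Measure ℝ).restrict (Ioo t (t + τ))).prod
              ((volume : Measure ℝ).restrict (Ioo t (t + τ)))) :=
          (lintegral_prod _ hq_meas.aemeasurable).symm
      _ = ∫⁻ z in Ioo t (t + τ) ×ˢ Ioo t (t + τ), ENNReal.ofReal (q z.1 z.2) := by
          rw [hprod_meas]
  have hfin' : Integrable (fun z : ℝ × ℝ => q z.1 z.2)
      ((volume : Measure (ℝ × ℝ)).restrict (Ioo t (t + τ) ×ˢ Ioo t (t + τ))) := hfin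
  have hofReal : ∫⁻ z in Ioo t (t + τ) ×ˢ Ioo t (t + τ), ENNReal.ofReal (q z.1 z.2)
      = ENNReal.ofReal (∫ z in Ioo t (t + τ) ×ˢ Ioo t (t + τ), q z.1 z.2) :=
    (ofReal_integral_eq_lintegral_ofReal hfin'
      (Filter.Eventually.of_forall fun z => hq_nonneg _ _)).symm
  -- identify with double interval integral
  have hIntProd : Integrable (fun z : ℝ × ℝ => q z.1 z.2)
      (((volume : Measure ℝ).restrict (Ioc t (t + τ))).prod
        ((volume : Measure ℝ).restrict (Ioc t (t + τ)))) := by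
    rw [hIoc, hprod_meas]
    exact hfin'
  have hS : (∫ r in t..(t + τ), ∫ s in t..(t + τ), q r s)
      = ∫ z in Ioo t (t + τ) ×ˢ Ioo t (t + τ), q z.1 z.2 := by
    rw [intervalIntegral.integral_of_le htt]
    calc ∫ r in Ioc t (t + τ), (∫ s in t..(t + τ), q r s)
        = ∫ r in Ioc t (t + τ), ∫ s in Ioc t (t + τ), q r s := by
          refine setIntegral_congr_fun measurableSet_Ioc fun r _ => ?_
          rw [intervalIntegral.integral_of_le htt]
      _ = ∫ z, q z.1 z.2
            ∂(((volume : Measure ℝ).restrict (Ioc t (t + τ))).prod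
              ((volume : Measure ℝ).restrict (Ioc t (t + τ)))) :=
          (integral_prod _ hIntProd).symm
      _ = ∫ z in Ioo t (t + τ) ×ˢ Ioo t (t + τ), q z.1 z.2 := by
          rw [hIoc, hprod_meas]
  set S : ℝ := ∫ z in Ioo t (t + τ) ×ˢ Ioo t (t + τ), q z.1 z.2 with hS_def
  have hS_nonneg : 0 ≤ S := integral_nonneg fun z => hq_nonneg _ _
  -- assemble the ENNReal chain
  have final : N ≤ ENNReal.ofReal (K ^ 2 * τ ^ p * S) := by
    calc N ≤ ∫⁻ s in Icc (0:ℝ) τ, H s := step2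
      _ ≤ ENNReal.ofReal (K ^ 2 * τ ^ p) *
            ∫⁻ s in Icc (0:ℝ) τ, ∫⁻ r in Ioc (0:ℝ) τ, ENNReal.ofReal (q (t + r) (t + s)) := step3
      _ = ENNReal.ofReal (K ^ 2 * τ ^ p) * ENNReal.ofReal S := by
          rw [htrans, hT, hofReal]
      _ = ENNReal.ofReal (K ^ 2 * τ ^ p * S) := by
          rw [← ENNReal.ofReal_mul (by positivity)]
  have hmain : (∫ ω, ‖(∫ r in (0:ℝ)..τ, f r) - (τ:ℂ) * f (τ * ξ ω)‖ ^ 2 ∂ℙ)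
      ≤ K ^ 2 * τ ^ p * S := by
    rw [hInt0]
    refine le_trans (ENNReal.toReal_mono ENNReal.ofReal_ne_top final) ?_
    rw [ENNReal.toReal_ofReal (by positivity)]
  -- conclude with square roots
  have hgoal2 : (∫ r in t..(t + τ), ∫ s in t..(t + τ),
      (g r - g s) ^ 2 / |r - s| ^ (2 * α + 1)) = S := by
    rw [← hS]
  refine le_trans (Real.sqrt_le_sqrt hmain) ?_
  rw [hgoal2]
  have h1 : Real.sqrt (K ^ 2 * τ ^ p * S)
      = |K| * Real.sqrt (τ ^ p) * Real.sqrt S := by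
    rw [Real.sqrt_mul (by positivity) S, Real.sqrt_mul (sq_nonneg K) (τ ^ p),
      Real.sqrt_sq_eq_abs]
  have h2 : Real.sqrt (τ ^ p) = τ ^ (α + 1/2 : ℝ) := by
    rw [Real.sqrt_eq_rpow, ← Real.rpow_mul h0τ,
      show p * (1/2 : ℝ) = α + 1/2 by rw [hp_def]; ring]
  rw [h1, h2]
  ring_nf
  exact le_refl _
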